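/- (Spherical subalgebra, Proposition 12(2): e_0 H_κ e_0 ≅ ℂ[z,∂_κ]^{ℤ/lℤ} = ℂ[z^l, z∂_κ, ∂_κ^l].) The set e_0 H_κ e_0 = {e_0 ∘ h ∘ e_0 : h ∈ H_κ} coincides with the ℂ-linear span of e_0 together with all finite products of the three operators e_0 ∘ Z^l ∘ e_0, e_0 ∘ Z ∘ ∂_κ ∘ e_0 and e_0 ∘ ∂_κ^l ∘ e_0. -/

import Mathlib

open LaurentPolynomial

noncomputable section

/-- The ℂ-algebra `L = ℂ[z, z⁻¹]` of Laurent polynomials (`T n` is the monomial `zⁿ`). -/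
abbrev Lau : Type := LaurentPolynomial ℂ

/-- Multiplication by `z`, as a ℂ-linear endomorphism of `L`. -/
def Zmul : Module.End ℂ Lau := LinearMap.mulLeft ℂ (T 1)

/-- Multiplication by `z⁻¹`, as a ℂ-linear endomorphism of `L`. -/
def Zinv : Module.End ℂ Lau := LinearMap.mulLeft ℂ (T (-1))

/-- The ℂ-algebra automorphism `Γ` of `L` determined by `Γ(z) = ζ⁻¹ z`,
i.e. `Γ(zⁿ) = ζ⁻ⁿ zⁿ`. -/
def Gam (ζ : ℂ) : Module.End ℂ Lau :=
  (Finsupp.lsum ℂ fun n : ℤ => LinearMap.toSpanSingleton ℂ Lau ((ζ⁻¹ ^ n) • T n)) ∘ₗ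
    (AddMonoidAlgebra.coeffLinearEquiv ℂ : Lau ≃ₗ[ℂ] (ℤ →₀ ℂ)).toLinearMap

/-- The formal derivative `d/dz : zⁿ ↦ n zⁿ⁻¹` on `L`. -/
def Deriv : Module.End ℂ Lau :=
  (Finsupp.lsum ℂ fun n : ℤ => LinearMap.toSpanSingleton ℂ Lau ((n : ℂ) • T (n - 1))) ∘ₗ
    (AddMonoidAlgebra.coeffLinearEquiv ℂ : Lau ≃ₗ[ℂ] (ℤ →₀ ℂ)).toLinearMap

/-- The idempotent `e_i = (1/l)·Σ_{j=0}^{l−1} ζ^{ij} Γ^j` of `ℂ(ℤ/lℤ)`, regarded as an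
endomorphism of `L`. -/
def eIdem (l : ℕ) (ζ : ℂ) (i : Fin l) : Module.End ℂ Lau :=
  (l : ℂ)⁻¹ • ∑ j ∈ Finset.range l, (ζ ^ ((i : ℕ) * j)) • (Gam ζ) ^ j

/-- The Dunkl operator `∂_κ = d/dz + l z⁻¹ Σ_{i=0}^{l−1} κ_i e_i` (where `κ_0 = 0`). -/
def Dunkl (l : ℕ) (ζ : ℂ) (κ : Fin l → ℂ) : Module.End ℂ Lau :=
  Deriv + (l : ℂ) • (Zinv * ∑ i : Fin l, κ i • eIdem l ζ i)

/-- The rational Cherednik algebra `H_κ` of type `ℤ/lℤ`: the unital ℂ-subalgebra of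
`End_ℂ(L)` generated by `Z`, `Γ` and `∂_κ`. -/
def Cher (l : ℕ) (ζ : ℂ) (κ : Fin l → ℂ) : Subalgebra ℂ (Module.End ℂ Lau) :=
  Algebra.adjoin ℂ {Zmul, Gam ζ, Dunkl l ζ κ}

namespace SphAux

/-- weighted shift operator: `T n ↦ f n • T (n+d)`. -/
def O (d : ℤ) (f : ℤ → ℂ) : Module.End ℂ Lau :=
  (Finsupp.lsum ℂ fun n : ℤ => LinearMap.toSpanSingleton ℂ Lau (f n • T (n + d))) ∘ₗ
    (AddMonoidAlgebra.coeffLinearEquiv ℂ : Lau ≃ₗ[ℂ] (ℤ →₀ ℂ)).toLinearMap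

theorem O_apply (d : ℤ) (f : ℤ → ℂ) (n : ℤ) : O d f (T n) = f n • T (n + d) := by
  have h1 : (AddMonoidAlgebra.coeffLinearEquiv ℂ : Lau ≃ₗ[ℂ] (ℤ →₀ ℂ)) (T n) = Finsupp.single n 1 := rfl
  rw [O, LinearMap.comp_apply, LinearEquiv.coe_coe, h1]
  erw [Finsupp.lsum_single]
  rw [LinearMap.toSpanSingleton_apply, one_smul]

theorem endext {A B : Module.End ℂ Lau} (h : ∀ n : ℤ, A (T n) = B (T n)) : A = B :=
  AddMonoidAlgebra.lhom_ext' fun a => LinearMap.ext fun b => by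
    have h1 : (AddMonoidAlgebra.single a b : Lau) = b • T a := by
      rw [LaurentPolynomial.T, AddMonoidAlgebra.smul_single', mul_one]
    show A (AddMonoidAlgebra.single a b) = B (AddMonoidAlgebra.single a b)
    rw [h1, map_smul, map_smul, h a]

theorem O_mul (d e : ℤ) (f g : ℤ → ℂ) :
    O d f * O e g = O (d + e) (fun n => f (n + e) * g n) := by
  apply endext; intro n
  show O d f (O e g (T n)) = _
  rw [O_apply, map_smul, O_apply, O_apply, smul_smul, mul_comm (g n)]
  congr 2
  ring

theorem O_add (d : ℤ) (f g : ℤ → ℂ) : O d f + O d g = O d (fun n => f n + g n) := by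
  apply endext; intro n
  show O d f (T n) + O d g (T n) = _
  rw [O_apply, O_apply, O_apply, add_smul]

theorem O_smul (d : ℤ) (c : ℂ) (f : ℤ → ℂ) : c • O d f = O d (fun n => c * f n) := by
  apply endext; intro n
  show c • (O d f (T n)) = _
  rw [O_apply, O_apply, smul_smul]

theorem O_one : O 0 (fun _ => 1) = 1 := by
  apply endext; intro n
  rw [O_apply]; simp

theorem O_zero : O 0 (fun _ => 0) = 0 := by
  apply endext; intro n
  rw [O_apply]; simp

theorem T_ne_zero (n : ℤ) : (T n : Lau) ≠ 0 := by
  intro h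
  exact (isUnit_T n).ne_zero h

theorem O_inj {d : ℤ} {f g : ℤ → ℂ} (h : O d f = O d g) : ∀ n, f n = g n := by
  intro n
  have := congrArg (fun A : Module.End ℂ Lau => A (T n)) h
  simp only [O_apply] at this
  exact smul_left_injective ℂ (T_ne_zero (n+d)) this

end SphAux
namespace SphAux

theorem O_congr {d d' : ℤ} {f g : ℤ → ℂ} (hd : d = d') (hf : ∀ n, f n = g n) :
    O d f = O d' g := by
  subst hd; congr 1; funext n; exact hf n

theorem O_zero' (d : ℤ) : O d (fun _ => 0) = 0 := by
  apply endext; intro n; rw [O_apply]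
  simp

theorem O_sum {α : Type*} (s : Finset α) (d : ℤ) (F : α → ℤ → ℂ) :
    ∑ j ∈ s, O d (F j) = O d (fun n => ∑ j ∈ s, F j n) := by
  classical
  induction s using Finset.cons_induction with
  | empty => simp [O_zero']
  | cons a s ha ih =>
      rw [Finset.sum_cons, ih, O_add]
      exact O_congr rfl (fun n => by rw [Finset.sum_cons])

theorem Zmul_eq : Zmul = O 1 (fun _ => 1) := by
  apply endext; intro n
  show T 1 * T n = _
  rw [O_apply, one_smul, ← LaurentPolynomial.T_add]
  congr 1; ring

theorem Zinv_eq : Zinv = O (-1) (fun _ => 1) := by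
  apply endext; intro n
  show T (-1) * T n = _
  rw [O_apply, one_smul, ← LaurentPolynomial.T_add]
  congr 1; ring

theorem Gam_eq (ζ : ℂ) : Gam ζ = O 0 (fun n => ζ⁻¹ ^ n) := by
  apply endext; intro n
  have h1 : (AddMonoidAlgebra.coeffLinearEquiv ℂ : Lau ≃ₗ[ℂ] (ℤ →₀ ℂ)) (T n) = Finsupp.single n 1 := rfl
  rw [Gam, O_apply, LinearMap.comp_apply, LinearEquiv.coe_coe, h1]
  erw [Finsupp.lsum_single]
  rw [LinearMap.toSpanSingleton_apply, one_smul]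
  congr 2
  ring

theorem Deriv_eq : Deriv = O (-1) (fun n => (n : ℂ)) := by
  apply endext; intro n
  have h1 : (AddMonoidAlgebra.coeffLinearEquiv ℂ : Lau ≃ₗ[ℂ] (ℤ →₀ ℂ)) (T n) = Finsupp.single n 1 := rfl
  rw [Deriv, O_apply, LinearMap.comp_apply, LinearEquiv.coe_coe, h1]
  erw [Finsupp.lsum_single]
  rw [LinearMap.toSpanSingleton_apply, one_smul, sub_eq_add_neg]

theorem O0_pow (f : ℤ → ℂ) (j : ℕ) : (O 0 f) ^ j = O 0 (fun n => f n ^ j) := by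
  induction j with
  | zero => simpa using O_one.symm
  | succ j ih =>
      rw [pow_succ, ih, O_mul]
      exact O_congr (by ring) (fun n => by rw [add_zero]; ring)

theorem Zmul_pow (a : ℕ) : Zmul ^ a = O (a : ℤ) (fun _ => 1) := by
  induction a with
  | zero => simpa using O_one.symm
  | succ a ih =>
      rw [pow_succ, ih, Zmul_eq, O_mul]
      exact O_congr (by push_cast; ring) (fun n => by ring)

end SphAux
namespace SphAux

variable (l : ℕ) [NeZero l] (ζ : ℂ) (κ : Fin l → ℂ)

/-- the index function `ZMod l → Fin l`. -/
def kc (r : ZMod l) : Fin l := ⟨r.val, ZMod.val_lt r⟩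

/-- the coefficient function of the Dunkl operator. -/
def phi : ℤ → ℂ := fun n => (n : ℂ) + l * κ (kc l (n : ZMod l))

/-- a "periodic diagonal" operator. -/
def Per (ψ : ZMod l → ℂ) : Module.End ℂ Lau := O 0 (fun n => ψ (n : ZMod l))

/-- indicator of `0` in `ZMod l`. -/
def chiz : ZMod l → ℂ := fun r => if r = 0 then 1 else 0

theorem kc_cast (r : ZMod l) : (((kc l r : Fin l) : ℕ) : ZMod l) = r :=
  ZMod.natCast_rightInverse r

variable {l ζ}

theorem zeta_ne_zero (hp : IsPrimitiveRoot ζ l) : ζ ≠ 0 := by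
  intro h0
  have h1 : ζ ^ l = 1 := hp.pow_eq_one
  rw [h0, zero_pow (NeZero.ne l)] at h1
  exact one_ne_zero h1.symm

theorem zpow_congr (hp : IsPrimitiveRoot ζ l) {m k : ℤ} (h : (m : ZMod l) = (k : ZMod l)) :
    ζ ^ m = ζ ^ k := by
  have hd : (l : ℤ) ∣ (m - k) := by
    rw [← ZMod.intCast_zmod_eq_zero_iff_dvd]
    push_cast
    rw [h, sub_self]
  have h1 : ζ ^ (m - k) = 1 := (hp.zpow_eq_one_iff_dvd _).2 hd
  have hz : ζ ≠ 0 := zeta_ne_zero hp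
  calc ζ ^ m = ζ ^ (m - k + k) := by ring_nf
    _ = ζ ^ (m - k) * ζ ^ k := zpow_add₀ hz _ _
    _ = ζ ^ k := by rw [h1, one_mul]

theorem sum_pow_zpow (hp : IsPrimitiveRoot ζ l) (m : ℤ) :
    ∑ j ∈ Finset.range l, (ζ ^ m) ^ j = if (l : ℤ) ∣ m then (l : ℂ) else 0 := by
  by_cases h : (l : ℤ) ∣ m
  · rw [if_pos h, (hp.zpow_eq_one_iff_dvd m).2 h]
    simp
  · rw [if_neg h]
    have hne : ζ ^ m ≠ 1 := fun he => h ((hp.zpow_eq_one_iff_dvd m).1 he)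
    have h1 : (ζ ^ m) ^ l = 1 := by
      rw [← zpow_natCast, ← zpow_mul, mul_comm, zpow_mul, zpow_natCast, hp.pow_eq_one, one_zpow]
    rw [geom_sum_eq hne, h1, sub_self, zero_div]

theorem eIdem_eq (hp : IsPrimitiveRoot ζ l) (i : Fin l) :
    eIdem l ζ i = O 0 (fun n => if (n : ZMod l) = ((i : ℕ) : ZMod l) then 1 else 0) := by
  have hz : ζ ≠ 0 := zeta_ne_zero hp
  have hl : (l : ℂ) ≠ 0 := Nat.cast_ne_zero.2 (NeZero.ne l)
  rw [eIdem]
  have h1 : ∀ j : ℕ, (ζ ^ ((i : ℕ) * j)) • (Gam ζ) ^ j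
      = O 0 (fun n => (ζ ^ ((i : ℤ) - n)) ^ j) := by
    intro j
    rw [Gam_eq, O0_pow, O_smul]
    refine O_congr rfl (fun n => ?_)
    have h2 : ζ⁻¹ ^ n = ζ ^ (-n) := by rw [zpow_neg, inv_zpow]
    rw [h2, pow_mul, ← zpow_natCast ζ (i : ℕ), ← mul_pow, ← zpow_add₀ hz, ← sub_eq_add_neg]
  rw [Finset.sum_congr rfl (fun j _ => h1 j), O_sum, O_smul]
  refine O_congr rfl (fun n => ?_)
  rw [sum_pow_zpow hp]
  have hiff : (l : ℤ) ∣ ((i : ℕ) - n) ↔ (n : ZMod l) = ((i : ℕ) : ZMod l) := by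
    rw [← ZMod.intCast_zmod_eq_zero_iff_dvd]
    push_cast
    constructor
    · intro h; linear_combination -h
    · intro h; linear_combination -h
  by_cases h : (n : ZMod l) = ((i : ℕ) : ZMod l)
  · rw [if_pos (hiff.2 h), if_pos h, inv_mul_cancel₀ hl]
  · rw [if_neg (fun hc => h (hiff.1 hc)), if_neg h, mul_zero]

theorem e0_eq (hp : IsPrimitiveRoot ζ l) : eIdem l ζ 0 = Per l (chiz l) := by
  rw [eIdem_eq hp, Per]
  refine O_congr rfl (fun n => ?_)
  have h0 : (((0 : Fin l) : ℕ) : ZMod l) = 0 := by simp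
  rw [h0]
  rfl

end SphAux
namespace SphAux

variable {l : ℕ} [NeZero l] {ζ : ℂ} (κ : Fin l → ℂ)

theorem sum_eIdem (hp : IsPrimitiveRoot ζ l) :
    ∑ i : Fin l, κ i • eIdem l ζ i = O 0 (fun n => κ (kc l (n : ZMod l))) := by
  have h1 : ∀ i : Fin l, κ i • eIdem l ζ i
      = O 0 (fun n => κ i * (if (n : ZMod l) = ((i : ℕ) : ZMod l) then 1 else 0)) := by
    intro i
    rw [eIdem_eq hp, O_smul]
  rw [Finset.sum_congr rfl (fun i _ => h1 i), O_sum]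
  refine O_congr rfl (fun n => ?_)
  have h2 : ∀ i : Fin l, ((n : ZMod l) = ((i : ℕ) : ZMod l)) ↔ i = kc l (n : ZMod l) := by
    intro i
    constructor
    · intro h
      apply Fin.ext
      show (i : ℕ) = ((n : ZMod l)).val
      rw [h, ZMod.val_natCast_of_lt i.isLt]
    · intro h
      rw [h, kc_cast]
  calc ∑ i : Fin l, κ i * (if (n : ZMod l) = ((i : ℕ) : ZMod l) then 1 else 0)
      = ∑ i : Fin l, (if i = kc l (n : ZMod l) then κ i else 0) := by
        refine Finset.sum_congr rfl (fun i _ => ?_)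
        by_cases h : i = kc l (n : ZMod l)
        · rw [if_pos h, if_pos ((h2 i).2 h), mul_one]
        · rw [if_neg h, if_neg (fun hc => h ((h2 i).1 hc)), mul_zero]
    _ = κ (kc l (n : ZMod l)) := by
        rw [Finset.sum_ite_eq' Finset.univ (kc l (n : ZMod l)) κ, if_pos (Finset.mem_univ _)]

theorem Dunkl_eq (hp : IsPrimitiveRoot ζ l) : Dunkl l ζ κ = O (-1) (phi l κ) := by
  rw [Dunkl, Deriv_eq, sum_eIdem κ hp, Zinv_eq, O_mul, O_smul]
  apply endext; intro n
  rw [LinearMap.add_apply, O_apply, O_apply, O_apply]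
  have h4 : n + (-1 + 0 : ℤ) = n + -1 := by ring
  rw [h4, ← add_smul]
  congr 1
  show (n : ℂ) + (l : ℂ) * (1 * κ (kc l (n : ZMod l))) = phi l κ n
  rw [one_mul, phi]

theorem per_mul_per (ψ ψ' : ZMod l → ℂ) :
    Per l ψ * Per l ψ' = Per l (fun r => ψ r * ψ' r) := by
  rw [Per, Per, Per, O_mul]
  exact O_congr (by ring) (fun n => by rw [add_zero])

theorem per_one : Per l (fun _ => 1) = 1 := by
  rw [Per]; exact O_one

theorem Gam_per (hp : IsPrimitiveRoot ζ l) :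
    Gam ζ = Per l (fun r => (ζ ^ r.val)⁻¹) := by
  rw [Gam_eq, Per]
  refine O_congr rfl (fun n => ?_)
  have h2 : ζ⁻¹ ^ n = ζ ^ (-n) := by rw [zpow_neg, inv_zpow]
  have h3 : ζ ^ (-n) = ζ ^ (-(((n : ZMod l)).val : ℤ)) := by
    refine zpow_congr hp ?_
    push_cast
    rw [ZMod.natCast_val, ZMod.cast_id]
  rw [h2, h3, zpow_neg, zpow_natCast]

/-- the coefficient functions of powers of the Dunkl operator. -/
def Phi : ℕ → ℤ → ℂ
  | 0, _ => 1
  | (b+1), n => Phi b n * phi l κ (n - b)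

theorem Dunkl_pow (hp : IsPrimitiveRoot ζ l) (b : ℕ) :
    (Dunkl l ζ κ) ^ b = O (-(b : ℤ)) (Phi κ b) := by
  induction b with
  | zero =>
      show _ = O (-(0:ℤ)) (fun _ => 1)
      rw [pow_zero]
      exact (O_congr (by ring) (fun n => rfl)).symm.trans O_one |>.symm
  | succ b ih =>
      rw [pow_succ', ih, Dunkl_eq κ hp, O_mul]
      refine O_congr (by push_cast; ring) (fun n => ?_)
      show phi l κ (n + -(b:ℤ)) * Phi κ b n = Phi κ b n * phi l κ (n - (b:ℤ))
      rw [← sub_eq_add_neg, mul_comm]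

theorem Phi_add (hp : IsPrimitiveRoot ζ l) (p q : ℕ) (n : ℤ) :
    Phi κ (p + q) n = Phi κ q n * Phi κ p (n - q) := by
  have h1 : (Dunkl l ζ κ) ^ (p + q) = (Dunkl l ζ κ) ^ p * (Dunkl l ζ κ) ^ q := pow_add _ _ _
  rw [Dunkl_pow κ hp, Dunkl_pow κ hp, Dunkl_pow κ hp, O_mul] at h1
  have h2 := O_inj (h1.trans (O_congr (show (-(p:ℤ)) + -(q:ℤ) = -((p+q : ℕ) : ℤ) by push_cast; ring)
    (fun n => rfl))) n
  rw [h2, ← sub_eq_add_neg, mul_comm]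

end SphAux
namespace SphAux

variable {l : ℕ} [NeZero l] {ζ : ℂ} (κ : Fin l → ℂ)

theorem per_Zpow (ψ : ZMod l → ℂ) (a : ℕ) :
    Per l ψ * Zmul ^ a = Zmul ^ a * Per l (fun r => ψ (r + a)) := by
  rw [Zmul_pow, Per, Per, O_mul, O_mul]
  refine O_congr (by ring) (fun n => ?_)
  show ψ (((n + (a : ℕ) : ℤ) : ZMod l)) * 1 = 1 * ψ ((n : ZMod l) + (a : ℕ))
  push_cast
  ring_nf

theorem Dpow_per (hp : IsPrimitiveRoot ζ l) (ψ : ZMod l → ℂ) (b : ℕ) :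
    (Dunkl l ζ κ) ^ b * Per l ψ = Per l (fun r => ψ (r + b)) * (Dunkl l ζ κ) ^ b := by
  rw [Dunkl_pow κ hp, Per, Per, O_mul, O_mul]
  refine O_congr (by ring) (fun n => ?_)
  show Phi κ b (n + 0) * ψ (n : ZMod l) = ψ (((n + -(b:ℤ) : ℤ) : ZMod l) + (b:ℕ)) * Phi κ b n
  rw [add_zero]
  have h1 : (((n + -(b:ℤ) : ℤ) : ZMod l) + (b:ℕ)) = (n : ZMod l) := by push_cast; ring
  rw [h1, mul_comm]

/-- correction term in the commutator `[∂,Z]`. -/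
def gam0 (l : ℕ) [NeZero l] (κ : Fin l → ℂ) : ZMod l → ℂ :=
  fun r => 1 + l * (κ (kc l (r + 1)) - κ (kc l r))

theorem DZ_comm (hp : IsPrimitiveRoot ζ l) :
    Dunkl l ζ κ * Zmul = Zmul * Dunkl l ζ κ + Per l (gam0 l κ) := by
  rw [Dunkl_eq κ hp, Zmul_eq, O_mul, O_mul, Per]
  apply endext; intro n
  rw [LinearMap.add_apply, O_apply, O_apply, O_apply]
  have h1 : n + (-1 + 1 : ℤ) = n + 0 := by ring
  have h2 : n + (1 + -1 : ℤ) = n + 0 := by ring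
  rw [h1, h2, ← add_smul]
  congr 1
  show phi l κ (n + 1) * 1 = 1 * phi l κ n + gam0 l κ (n : ZMod l)
  rw [phi, phi, gam0]
  have h3 : ((n + 1 : ℤ) : ZMod l) = (n : ZMod l) + 1 := by push_cast; ring
  rw [h3]
  push_cast
  ring

theorem D_per (hp : IsPrimitiveRoot ζ l) (ψ : ZMod l → ℂ) :
    Dunkl l ζ κ * Per l ψ = Per l (fun r => ψ (r + 1)) * Dunkl l ζ κ := by
  have h := Dpow_per κ hp ψ 1
  rw [pow_one] at h
  rw [h]
  simp only [Nat.cast_one]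

theorem per_add (f g : ZMod l → ℂ) : Per l f + Per l g = Per l (fun r => f r + g r) := by
  rw [Per, Per, Per, O_add]

theorem DpowZ (hp : IsPrimitiveRoot ζ l) (b : ℕ) :
    ∃ ψ : ZMod l → ℂ, (Dunkl l ζ κ) ^ (b + 1) * Zmul
      = Zmul * (Dunkl l ζ κ) ^ (b + 1) + Per l ψ * (Dunkl l ζ κ) ^ b := by
  induction b with
  | zero =>
      refine ⟨gam0 l κ, ?_⟩
      simp only [zero_add, pow_one, pow_zero, mul_one]
      exact DZ_comm κ hp
  | succ b ih =>
      obtain ⟨ψ, h⟩ := ih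
      refine ⟨fun r => gam0 l κ r + ψ (r + 1), ?_⟩
      have h1 : (Dunkl l ζ κ) ^ (b + 2) * Zmul
          = Dunkl l ζ κ * ((Dunkl l ζ κ) ^ (b + 1) * Zmul) := by
        rw [pow_succ' (Dunkl l ζ κ) (b+1), mul_assoc]
      rw [h1, h, mul_add, ← mul_assoc, ← mul_assoc, DZ_comm κ hp, D_per κ hp]
      rw [add_mul, ← per_add]
      calc (Zmul * Dunkl l ζ κ) * (Dunkl l ζ κ) ^ (b+1) + Per l (gam0 l κ) * (Dunkl l ζ κ) ^ (b+1)
            + Per l (fun r => ψ (r+1)) * Dunkl l ζ κ * (Dunkl l ζ κ) ^ b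
          = Zmul * (Dunkl l ζ κ) ^ (b+2)
            + (Per l (gam0 l κ) * (Dunkl l ζ κ) ^ (b+1)
              + Per l (fun r => ψ (r+1)) * (Dunkl l ζ κ) ^ (b+1)) := by
            rw [mul_assoc, ← pow_succ' (Dunkl l ζ κ) (b+1), mul_assoc,
              ← pow_succ' (Dunkl l ζ κ) b]
            ring_nf
            rw [add_assoc]
        _ = Zmul * (Dunkl l ζ κ) ^ (b + 2)
            + (Per l (gam0 l κ) + Per l (fun r => ψ (r+1))) * (Dunkl l ζ κ) ^ (b+1) := by
            rw [add_mul]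

end SphAux
namespace SphAux

variable (l : ℕ) [NeZero l] (ζ : ℂ) (κ : Fin l → ℂ)

/-- PBW monomials spanning the Cherednik algebra. -/
def Vmon : Set (Module.End ℂ Lau) :=
  {h | ∃ (a b : ℕ) (ψ : ZMod l → ℂ), h = Zmul ^ a * Per l ψ * (Dunkl l ζ κ) ^ b}

/-- the span of the PBW monomials. -/
def V : Submodule ℂ (Module.End ℂ Lau) := Submodule.span ℂ (Vmon l ζ κ)

variable {l ζ κ}

theorem monV (a b : ℕ) (ψ : ZMod l → ℂ) :
    Zmul ^ a * Per l ψ * (Dunkl l ζ κ) ^ b ∈ V l ζ κ :=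
  Submodule.subset_span ⟨a, b, ψ, rfl⟩

theorem per_Z (ψ : ZMod l → ℂ) :
    Per l ψ * Zmul = Zmul * Per l (fun r => ψ (r + 1)) := by
  have h := per_Zpow (l := l) ψ 1
  simp only [pow_one, Nat.cast_one] at h
  exact h

theorem V_mul_Z (hp : IsPrimitiveRoot ζ l) :
    ∀ v ∈ V l ζ κ, v * Zmul ∈ V l ζ κ := by
  intro v hv
  induction hv using Submodule.span_induction with
  | mem x hx =>
      obtain ⟨a, b, ψ, rfl⟩ := hx
      match b with
      | 0 =>
          rw [pow_zero, mul_one, mul_assoc, per_Z, ← mul_assoc, ← pow_succ]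
          have := monV (κ := κ) (ζ := ζ) (a + 1) 0 (fun r => ψ (r + 1))
          rwa [pow_zero, mul_one] at this
      | (b' + 1) =>
          obtain ⟨τ, hτ⟩ := DpowZ κ hp b'
          rw [mul_assoc (Zmul ^ a * Per l ψ), hτ, mul_add, ← mul_assoc, ← mul_assoc]
          apply Submodule.add_mem
          · rw [mul_assoc (Zmul ^ a), per_Z, ← mul_assoc, ← pow_succ]
            exact monV (a + 1) (b' + 1) _
          · rw [mul_assoc (Zmul ^ a), per_mul_per]
            exact monV a b' _
  | zero => simpa using Submodule.zero_mem _
  | add x y _ _ ihx ihy => rw [add_mul]; exact Submodule.add_mem _ ihx ihy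
  | smul c x _ ihx => rw [smul_mul_assoc]; exact Submodule.smul_mem _ _ ihx

theorem V_mul_per (hp : IsPrimitiveRoot ζ l) (γ : ZMod l → ℂ) :
    ∀ v ∈ V l ζ κ, v * Per l γ ∈ V l ζ κ := by
  intro v hv
  induction hv using Submodule.span_induction with
  | mem x hx =>
      obtain ⟨a, b, ψ, rfl⟩ := hx
      rw [mul_assoc (Zmul ^ a * Per l ψ), Dpow_per κ hp, ← mul_assoc, mul_assoc (Zmul ^ a),
        per_mul_per]
      exact monV a b _
  | zero => simpa using Submodule.zero_mem _
  | add x y _ _ ihx ihy => rw [add_mul]; exact Submodule.add_mem _ ihx ihy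
  | smul c x _ ihx => rw [smul_mul_assoc]; exact Submodule.smul_mem _ _ ihx

theorem V_mul_D : ∀ v ∈ V l ζ κ, v * Dunkl l ζ κ ∈ V l ζ κ := by
  intro v hv
  induction hv using Submodule.span_induction with
  | mem x hx =>
      obtain ⟨a, b, ψ, rfl⟩ := hx
      rw [mul_assoc, mul_assoc, ← pow_succ, ← mul_assoc]
      exact monV a (b + 1) _
  | zero => simpa using Submodule.zero_mem _
  | add x y _ _ ihx ihy => rw [add_mul]; exact Submodule.add_mem _ ihx ihy
  | smul c x _ ihx => rw [smul_mul_assoc]; exact Submodule.smul_mem _ _ ihx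

theorem one_mem_V : (1 : Module.End ℂ Lau) ∈ V l ζ κ := by
  have h := monV (κ := κ) (ζ := ζ) (l := l) 0 0 (fun _ => 1)
  rwa [pow_zero, pow_zero, one_mul, mul_one, per_one] at h

theorem cher_le_V (hp : IsPrimitiveRoot ζ l) :
    ∀ h ∈ Cher l ζ κ, h ∈ V l ζ κ := by
  have key : ∀ h ∈ Cher l ζ κ, ∀ v ∈ V l ζ κ, v * h ∈ V l ζ κ := by
    intro h hh
    induction hh using Algebra.adjoin_induction with
    | mem x hx =>
        simp only [Set.mem_insert_iff, Set.mem_singleton_iff] at hx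
        rcases hx with rfl | rfl | rfl
        · exact fun v hv => V_mul_Z hp v hv
        · intro v hv
          rw [Gam_per hp]
          exact V_mul_per hp _ v hv
        · exact fun v hv => V_mul_D v hv
    | algebraMap r =>
        intro v hv
        rw [Algebra.algebraMap_eq_smul_one, mul_smul_comm, mul_one]
        exact Submodule.smul_mem _ _ hv
    | add x y hx hy ihx ihy =>
        intro v hv
        rw [mul_add]
        exact Submodule.add_mem _ (ihx v hv) (ihy v hv)
    | mul x y hx hy ihx ihy =>
        intro v hv
        rw [← mul_assoc]
        exact ihy _ (ihx v hv)
  intro h hh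
  have := key h hh 1 one_mem_V
  rwa [one_mul] at this

end SphAux
namespace SphAux

variable {l : ℕ} [NeZero l] {ζ : ℂ} (κ : Fin l → ℂ)

/-- indicator of divisibility by `l` on `ℤ`. -/
def chI (l : ℕ) : ℤ → ℂ := fun n => if (l : ℤ) ∣ n then 1 else 0

theorem chiz_cast (n : ℤ) : chiz l ((n : ZMod l)) = chI l n := by
  rw [chiz, chI]
  by_cases h : (l : ℤ) ∣ n
  · rw [if_pos h, if_pos (by rwa [ZMod.intCast_zmod_eq_zero_iff_dvd])]
  · rw [if_neg h, if_neg (fun hc => h ((ZMod.intCast_zmod_eq_zero_iff_dvd n l).1 hc))]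

theorem per_chiz_eq : Per l (chiz l) = O 0 (chI l) :=
  O_congr rfl (fun n => chiz_cast n)

theorem chI_sq (n : ℤ) : chI l n * chI l n = chI l n := by
  rw [chI]; by_cases h : (l : ℤ) ∣ n <;> simp [h]

theorem chI_shift {m : ℤ} (hm : (l : ℤ) ∣ m) (n : ℤ) : chI l (n + m) = chI l n := by
  rw [chI, chI]
  by_cases h : (l : ℤ) ∣ n
  · rw [if_pos (Dvd.dvd.add h hm), if_pos h]
  · rw [if_neg (fun hc => h (by simpa using Dvd.dvd.sub hc hm)), if_neg h]

theorem sandwich (d : ℤ) (f : ℤ → ℂ) :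
    Per l (chiz l) * O d f * Per l (chiz l)
      = O d (fun n => chI l (n + d) * f n * chI l n) := by
  rw [per_chiz_eq, O_mul, O_mul]
  refine O_congr (by ring) (fun n => ?_)
  show chI l (n + 0 + d) * f (n + 0) * chI l n = _
  rw [add_zero]

theorem ZperD_eq (hp : IsPrimitiveRoot ζ l) (a b : ℕ) (ψ : ZMod l → ℂ) :
    Zmul ^ a * Per l ψ * (Dunkl l ζ κ) ^ b
      = O ((a : ℤ) + -(b : ℤ)) (fun n => ψ (((n + -(b : ℤ) : ℤ) : ZMod l)) * Phi κ b n) := by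
  rw [Zmul_pow, Per, Dunkl_pow κ hp, O_mul, O_mul]
  refine O_congr (by ring) (fun n => ?_)
  show (1 : ℂ) * ψ (((n + -(b:ℤ) : ℤ) : ZMod l)) * Phi κ b n = _
  rw [one_mul]

/-- `G1 = e₀ Z^l e₀` in normal form. -/
theorem G1_eq (hp : IsPrimitiveRoot ζ l) :
    eIdem l ζ 0 * Zmul ^ l * eIdem l ζ 0 = O (l : ℤ) (chI l) := by
  rw [e0_eq hp, Zmul_pow, sandwich]
  refine O_congr rfl (fun n => ?_)
  show chI l (n + l) * 1 * chI l n = chI l n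
  rw [mul_one, chI_shift (dvd_refl _), chI_sq]

/-- `G2 = e₀ (Z ∂) e₀` in normal form. -/
theorem G2_eq (hp : IsPrimitiveRoot ζ l) (hκ0 : κ 0 = 0) :
    eIdem l ζ 0 * Zmul * Dunkl l ζ κ * eIdem l ζ 0
      = O 0 (fun n => chI l n * (n : ℂ)) := by
  have h1 : Zmul * Dunkl l ζ κ = O 0 (phi l κ) := by
    rw [Zmul_eq, Dunkl_eq κ hp, O_mul]
    refine O_congr (by ring) (fun n => ?_)
    show (1 : ℂ) * phi l κ n = phi l κ n
    rw [one_mul]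
  have h2 : eIdem l ζ 0 * Zmul * Dunkl l ζ κ * eIdem l ζ 0
      = eIdem l ζ 0 * (Zmul * Dunkl l ζ κ) * eIdem l ζ 0 := by
    rw [mul_assoc (eIdem l ζ 0)]
  rw [h2, h1, e0_eq hp, sandwich]
  refine O_congr rfl (fun n => ?_)
  show chI l (n + 0) * phi l κ n * chI l n = chI l n * (n : ℂ)
  rw [add_zero]
  by_cases h : (l : ℤ) ∣ n
  · have hz : (n : ZMod l) = 0 := by rwa [ZMod.intCast_zmod_eq_zero_iff_dvd]
    have hkc : kc l ((n : ZMod l)) = 0 := by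
      apply Fin.ext
      show ((n : ZMod l)).val = (0 : Fin l).val
      rw [hz, ZMod.val_zero, Fin.val_zero]
    rw [phi, hkc, hκ0, mul_zero, add_zero, mul_comm (chI l n), mul_assoc, chI_sq]
  · rw [chI, if_neg h]
    ring

/-- `G3 = e₀ ∂^l e₀` in normal form. -/
theorem G3_eq (hp : IsPrimitiveRoot ζ l) :
    eIdem l ζ 0 * (Dunkl l ζ κ) ^ l * eIdem l ζ 0
      = O (-(l : ℤ)) (fun n => chI l n * Phi κ l n) := by
  rw [e0_eq hp, Dunkl_pow κ hp, sandwich]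
  refine O_congr rfl (fun n => ?_)
  show chI l (n + -(l:ℤ)) * Phi κ l n * chI l n = chI l n * Phi κ l n
  rw [chI_shift (dvd_neg.2 (dvd_refl _))]
  by_cases h : (l : ℤ) ∣ n <;> simp [chI, h]

theorem G1_pow (m : ℕ) : (O (l : ℤ) (chI l)) ^ (m + 1) = O ((l : ℤ) * (m + 1)) (chI l) := by
  induction m with
  | zero => exact O_congr (by ring) (fun n => rfl)
  | succ m ih =>
      rw [pow_succ, ih, O_mul]
      refine O_congr (by push_cast; ring) (fun n => ?_)
      show chI l (n + l) * chI l n = chI l n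
      rw [chI_shift (dvd_refl _), chI_sq]

theorem G2_pow (k : ℕ) :
    (O 0 (fun n => chI l n * (n : ℂ))) ^ (k + 1)
      = O 0 (fun n => chI l n * (n : ℂ) ^ (k + 1)) := by
  rw [O0_pow]
  refine O_congr rfl (fun n => ?_)
  show (chI l n * (n:ℂ)) ^ (k+1) = _
  rw [mul_pow]
  congr 1
  rw [chI]
  by_cases h : (l : ℤ) ∣ n <;> simp [h]

theorem G3_pow (hp : IsPrimitiveRoot ζ l) (m : ℕ) :
    (O (-(l : ℤ)) (fun n => chI l n * Phi κ l n)) ^ (m + 1)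
      = O (-((l : ℤ) * (m + 1))) (fun n => chI l n * Phi κ (l * (m + 1)) n) := by
  induction m with
  | zero =>
      rw [pow_succ, pow_zero, one_mul]
      refine O_congr (by ring) (fun n => ?_)
      show chI l n * Phi κ l n = chI l n * Phi κ (l * 1) n
      rw [mul_one]
  | succ m ih =>
      rw [pow_succ, ih, O_mul]
      refine O_congr (by push_cast; ring) (fun n => ?_)
      show chI l (n + -(l:ℤ)) * Phi κ (l*(m+1)) (n + -(l:ℤ)) * (chI l n * Phi κ l n) = _
      have hadd : Phi κ (l * (m + 1) + l) n = Phi κ l n * Phi κ (l*(m+1)) (n - (l:ℤ)) :=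
        Phi_add κ hp (l*(m+1)) l n
      have hmul : l * (m + 1 + 1) = l * (m+1) + l := by ring
      rw [hmul, hadd, chI_shift (dvd_neg.2 (dvd_refl _)), ← sub_eq_add_neg]
      by_cases h : (l : ℤ) ∣ n
      · simp only [chI, if_pos h, one_mul, mul_one]
        ring
      · simp [chI, if_neg h]

end SphAux
namespace SphAux

variable (l : ℕ) [NeZero l] (ζ : ℂ) (κ : Fin l → ℂ)

/-- the three generators of the spherical subalgebra. -/
def Gens : Set (Module.End ℂ Lau) :=
  {eIdem l ζ 0 * Zmul ^ l * eIdem l ζ 0,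
   eIdem l ζ 0 * Zmul * Dunkl l ζ κ * eIdem l ζ 0,
   eIdem l ζ 0 * (Dunkl l ζ κ) ^ l * eIdem l ζ 0}

/-- the candidate description of the spherical subalgebra. -/
def SS : Submodule ℂ (Module.End ℂ Lau) :=
  Submodule.span ℂ ({eIdem l ζ 0} ∪ (Subsemigroup.closure (Gens l ζ κ) : Set (Module.End ℂ Lau)))

variable {l ζ κ}

theorem e0_idem (hp : IsPrimitiveRoot ζ l) : eIdem l ζ 0 * eIdem l ζ 0 = eIdem l ζ 0 := by
  rw [e0_eq hp, per_mul_per]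
  congr 1
  funext r
  rw [chiz]
  by_cases h : r = 0 <;> simp [h]

theorem sand_absorb {e y : Module.End ℂ Lau} (he : e * e = e) :
    (e * y * e) * e = e * y * e ∧ e * (e * y * e) = e * y * e := by
  constructor
  · rw [mul_assoc, he]
  · rw [← mul_assoc, ← mul_assoc, he]

theorem clo_absorb (hp : IsPrimitiveRoot ζ l) :
    ∀ x ∈ Subsemigroup.closure (Gens l ζ κ),
      x * eIdem l ζ 0 = x ∧ eIdem l ζ 0 * x = x := by
  intro x hx
  induction hx using Subsemigroup.closure_induction with
  | mem x hx =>
      rcases hx with rfl | rfl | rfl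
      · exact sand_absorb (e0_idem hp)
      · rw [mul_assoc (eIdem l ζ 0) Zmul (Dunkl l ζ κ)]
        exact sand_absorb (e0_idem hp)
      · exact sand_absorb (e0_idem hp)
  | mul x y hx hy ihx ihy =>
      constructor
      · rw [mul_assoc, ihy.1]
      · rw [← mul_assoc, ihx.2]

theorem clo_mul_SS (hp : IsPrimitiveRoot ζ l) {x y : Module.End ℂ Lau}
    (hx : x ∈ Subsemigroup.closure (Gens l ζ κ)) (hy : y ∈ SS l ζ κ) :
    x * y ∈ SS l ζ κ := by
  induction hy using Submodule.span_induction with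
  | mem z hz =>
      rcases hz with hz | hz
      · rw [Set.mem_singleton_iff] at hz
        subst hz
        rw [(clo_absorb hp x hx).1]
        exact Submodule.subset_span (Set.mem_union_right _ hx)
      · exact Submodule.subset_span (Set.mem_union_right _ (Subsemigroup.mul_mem _ hx hz))
  | zero => rw [mul_zero]; exact Submodule.zero_mem _
  | add a b _ _ iha ihb => rw [mul_add]; exact Submodule.add_mem _ iha ihb
  | smul c a _ iha => rw [mul_smul_comm]; exact Submodule.smul_mem _ _ iha

theorem SS_mul_clo (hp : IsPrimitiveRoot ζ l) {x y : Module.End ℂ Lau}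
    (hx : x ∈ SS l ζ κ) (hy : y ∈ Subsemigroup.closure (Gens l ζ κ)) :
    x * y ∈ SS l ζ κ := by
  induction hx using Submodule.span_induction with
  | mem z hz =>
      rcases hz with hz | hz
      · rw [Set.mem_singleton_iff] at hz
        subst hz
        rw [(clo_absorb hp y hy).2]
        exact Submodule.subset_span (Set.mem_union_right _ hy)
      · exact Submodule.subset_span (Set.mem_union_right _ (Subsemigroup.mul_mem _ hz hy))
  | zero => rw [zero_mul]; exact Submodule.zero_mem _
  | add a b _ _ iha ihb => rw [add_mul]; exact Submodule.add_mem _ iha ihb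
  | smul c a _ iha => rw [smul_mul_assoc]; exact Submodule.smul_mem _ _ iha

theorem gen_pow_mem {g : Module.End ℂ Lau} (hg : g ∈ Gens l ζ κ) (m : ℕ) :
    g ^ (m + 1) ∈ Subsemigroup.closure (Gens l ζ κ) := by
  induction m with
  | zero => rw [pow_one]; exact Subsemigroup.subset_closure hg
  | succ m ih => rw [pow_succ]; exact Subsemigroup.mul_mem _ ih (Subsemigroup.subset_closure hg)

theorem poly_exists (a : ℕ) :
    ∃ p : Polynomial ℂ, ∀ n : ℤ, (l : ℤ) ∣ n → Phi κ a n = p.eval (n : ℂ) := by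
  induction a with
  | zero => exact ⟨1, fun n _ => by rw [Phi, Polynomial.eval_one]⟩
  | succ a ih =>
      obtain ⟨p, hperiod⟩ := ih
      refine ⟨p * (Polynomial.X + Polynomial.C
        ((-(a : ℂ)) + l * κ (kc l ((-(a : ℤ) : ℤ) : ZMod l)))), fun n hn => ?_⟩
      have h1 : Phi κ (a + 1) n = Phi κ a n * phi l κ (n - a) := rfl
      have h2 : ((n - (a:ℤ) : ℤ) : ZMod l) = ((-(a:ℤ) : ℤ) : ZMod l) := by
        have hz : ((n : ℤ) : ZMod l) = 0 := by rwa [ZMod.intCast_zmod_eq_zero_iff_dvd]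
        push_cast
        rw [hz]
        ring
      rw [h1, hperiod n hn, phi, h2]
      rw [Polynomial.eval_mul, Polynomial.eval_add, Polynomial.eval_X, Polynomial.eval_C]
      push_cast
      ring

theorem polydiag (hp : IsPrimitiveRoot ζ l) (hκ0 : κ 0 = 0) (p : Polynomial ℂ) :
    O 0 (fun n => chI l n * p.eval (n : ℂ)) ∈ SS l ζ κ := by
  induction p using Polynomial.induction_on' with
  | add p q ihp ihq =>
      have h : O 0 (fun n => chI l n * (p + q).eval (n:ℂ))
          = O 0 (fun n => chI l n * p.eval (n:ℂ)) + O 0 (fun n => chI l n * q.eval (n:ℂ)) := by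
        rw [O_add]
        exact O_congr rfl (fun n => by rw [Polynomial.eval_add]; ring)
      rw [h]
      exact Submodule.add_mem _ ihp ihq
  | monomial k c =>
      have h : O 0 (fun n => chI l n * (Polynomial.monomial k c).eval (n:ℂ))
          = c • O 0 (fun n => chI l n * (n:ℂ) ^ k) := by
        rw [O_smul]
        exact O_congr rfl (fun n => by rw [Polynomial.eval_monomial]; ring)
      rw [h]
      apply Submodule.smul_mem
      match k with
      | 0 =>
          have h0 : O 0 (fun n => chI l n * (n:ℂ) ^ 0) = eIdem l ζ 0 := by
            rw [e0_eq hp, per_chiz_eq]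
            exact O_congr rfl (fun n => by rw [pow_zero, mul_one])
          rw [h0]
          exact Submodule.subset_span (Set.mem_union_left _ rfl)
      | (k' + 1) =>
          rw [← G2_pow]
          refine Submodule.subset_span (Set.mem_union_right _ ?_)
          rw [← G2_eq κ hp hκ0]
          exact gen_pow_mem (by rw [Gens]; simp) k'

end SphAux
namespace SphAux

variable {l : ℕ} [NeZero l] {ζ : ℂ} (κ : Fin l → ℂ)

theorem diag_mem (hp : IsPrimitiveRoot ζ l) (hκ0 : κ 0 = 0) (b : ℕ) :
    O 0 (fun n => chI l n * Phi κ b n) ∈ SS l ζ κ := by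
  obtain ⟨p, hpp⟩ := poly_exists (κ := κ) (l := l) b
  have h : O 0 (fun n => chI l n * Phi κ b n) = O 0 (fun n => chI l n * p.eval (n:ℂ)) := by
    refine O_congr rfl (fun n => ?_)
    by_cases hn : (l:ℤ) ∣ n
    · rw [hpp n hn]
    · simp [chI, hn]
  rw [h]
  exact polydiag hp hκ0 p

theorem mon_SS (hp : IsPrimitiveRoot ζ l) (hκ0 : κ 0 = 0) (a b : ℕ) (ψ : ZMod l → ℂ) :
    eIdem l ζ 0 * (Zmul ^ a * Per l ψ * (Dunkl l ζ κ) ^ b) * eIdem l ζ 0 ∈ SS l ζ κ := by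
  rw [ZperD_eq κ hp, e0_eq hp, sandwich]
  by_cases hdvd : (l : ℤ) ∣ ((a : ℤ) + -(b : ℤ))
  · -- the coefficient function is constant `c` on the support
    have hF : ∀ n : ℤ, chI l (n + ((a:ℤ) + -(b:ℤ)))
          * (ψ (((n + -(b:ℤ) : ℤ) : ZMod l)) * Phi κ b n) * chI l n
        = ψ (((-(b:ℤ) : ℤ) : ZMod l)) * (chI l n * Phi κ b n) := by
      intro n
      by_cases hn : (l : ℤ) ∣ n
      · have h1 : chI l (n + ((a:ℤ) + -(b:ℤ))) = chI l n := chI_shift hdvd n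
        have hz : ((n : ℤ) : ZMod l) = 0 := by rwa [ZMod.intCast_zmod_eq_zero_iff_dvd]
        have h2 : ((n + -(b:ℤ) : ℤ) : ZMod l) = ((-(b:ℤ) : ℤ) : ZMod l) := by
          push_cast
          rw [hz]
          ring
        rw [h1, h2]
        simp only [chI, if_pos hn]
        ring
      · simp [chI, hn]
    rw [O_congr rfl hF, ← O_smul]
    apply Submodule.smul_mem
    rcases le_total b a with hba | hab
    · -- a = b + l * m
      have hd3 : l ∣ (a - b) := by
        rw [← Int.natCast_dvd_natCast, Nat.cast_sub hba]
        simpa [sub_eq_add_neg] using hdvd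
      obtain ⟨m, hm⟩ := hd3
      match m, hm with
      | 0, hm =>
          have ha : a = b := by omega
          subst ha
          have hd0 : ((a:ℤ) + -(a:ℤ)) = 0 := by ring
          rw [O_congr hd0 (fun n => rfl)]
          exact diag_mem κ hp hκ0 a
      | m + 1, hm =>
          have ha2 : a = b + l * (m + 1) := by omega
          have hmul : O ((l:ℤ) * (m + 1)) (chI l) * O 0 (fun n => chI l n * Phi κ b n)
              = O ((a:ℤ) + -(b:ℤ)) (fun n => chI l n * Phi κ b n) := by
            rw [O_mul]
            refine O_congr (by push_cast [ha2]; ring) (fun n => ?_)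
            show chI l (n + 0) * (chI l n * Phi κ b n) = _
            rw [add_zero]
            by_cases hn : (l : ℤ) ∣ n <;> simp [chI, hn]
          rw [← hmul]
          refine clo_mul_SS hp ?_ (diag_mem κ hp hκ0 b)
          rw [← G1_pow, ← G1_eq hp]
          exact gen_pow_mem (by rw [Gens]; simp) m
    · -- b = a + l * m
      have hd3 : l ∣ (b - a) := by
        rw [← Int.natCast_dvd_natCast, Nat.cast_sub hab]
        have : ((b:ℤ) - a) = -((a:ℤ) + -(b:ℤ)) := by ring
        rw [this]
        exact dvd_neg.2 hdvd
      obtain ⟨m, hm⟩ := hd3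
      match m, hm with
      | 0, hm =>
          have ha : a = b := by omega
          subst ha
          have hd0 : ((a:ℤ) + -(a:ℤ)) = 0 := by ring
          rw [O_congr hd0 (fun n => rfl)]
          exact diag_mem κ hp hκ0 a
      | m + 1, hm =>
          have hb : b = a + l * (m + 1) := by omega
          have hmul : O 0 (fun n => chI l n * Phi κ a n)
                * O (-((l:ℤ) * (m + 1))) (fun n => chI l n * Phi κ (l * (m+1)) n)
              = O ((a:ℤ) + -(b:ℤ)) (fun n => chI l n * Phi κ b n) := by
            rw [O_mul]
            refine O_congr (by push_cast [hb]; ring) (fun n => ?_)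
            show chI l (n + -((l:ℤ) * (m+1))) * Phi κ a (n + -((l:ℤ)*(m+1)))
                * (chI l n * Phi κ (l * (m+1)) n) = chI l n * Phi κ b n
            by_cases hn : (l : ℤ) ∣ n
            · have h1 : chI l (n + -((l:ℤ) * (m+1))) = chI l n := by
                refine chI_shift (dvd_neg.2 ?_) n
                exact Dvd.dvd.mul_right (dvd_refl _) _
              have h2 : Phi κ b n = Phi κ (l*(m+1)) n * Phi κ a (n - (l*(m+1) : ℕ)) := by
                rw [hb]
                exact Phi_add κ hp a (l*(m+1)) n
              rw [h1, h2]
              have h3 : ((l * (m+1) : ℕ) : ℤ) = (l:ℤ) * (m+1) := by push_cast; ring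
              rw [h3, sub_eq_add_neg]
              simp only [chI, if_pos hn]
              ring
            · simp [chI, hn]
          rw [← hmul]
          refine SS_mul_clo hp (diag_mem κ hp hκ0 a) ?_
          rw [← G3_pow κ hp, ← G3_eq κ hp]
          exact gen_pow_mem (by rw [Gens]; simp) m
  · -- off-diagonal: the sandwiched operator is zero
    have hF : ∀ n : ℤ, chI l (n + ((a:ℤ) + -(b:ℤ)))
          * (ψ (((n + -(b:ℤ) : ℤ) : ZMod l)) * Phi κ b n) * chI l n = 0 := by
      intro n
      by_cases hn : (l : ℤ) ∣ n
      · have h1 : ¬ (l:ℤ) ∣ (n + ((a:ℤ) + -(b:ℤ))) := by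
          intro hc
          exact hdvd (by simpa using Dvd.dvd.sub hc hn)
        simp only [chI, if_neg h1]
        ring
      · simp [chI, hn]
    rw [O_congr rfl hF, O_zero']
    exact Submodule.zero_mem _

end SphAux
namespace SphAux

variable {l : ℕ} [NeZero l] {ζ : ℂ} (κ : Fin l → ℂ)

theorem e0_mem_cher : eIdem l ζ 0 ∈ Cher l ζ κ := by
  rw [eIdem]
  refine Subalgebra.smul_mem _ (Subalgebra.sum_mem _ fun j _ => Subalgebra.smul_mem _
    (Subalgebra.pow_mem _ (Algebra.subset_adjoin (by simp)) j) _) _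

theorem sandV (hp : IsPrimitiveRoot ζ l) (hκ0 : κ 0 = 0) :
    ∀ v ∈ V l ζ κ, eIdem l ζ 0 * v * eIdem l ζ 0 ∈ SS l ζ κ := by
  intro v hv
  induction hv using Submodule.span_induction with
  | mem x hx =>
      obtain ⟨a, b, ψ, rfl⟩ := hx
      exact mon_SS κ hp hκ0 a b ψ
  | zero => rw [mul_zero, zero_mul]; exact Submodule.zero_mem _
  | add x y _ _ ihx ihy =>
      rw [mul_add, add_mul]
      exact Submodule.add_mem _ ihx ihy
  | smul c x _ ihx =>
      rw [mul_smul_comm, smul_mul_assoc]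
      exact Submodule.smul_mem _ _ ihx

theorem clo_form (hp : IsPrimitiveRoot ζ l) :
    ∀ x ∈ Subsemigroup.closure (Gens l ζ κ),
      ∃ h ∈ Cher l ζ κ, x = eIdem l ζ 0 * h * eIdem l ζ 0 := by
  intro x hx
  induction hx using Subsemigroup.closure_induction with
  | mem x hx =>
      rcases hx with rfl | rfl | rfl
      · exact ⟨Zmul ^ l, Subalgebra.pow_mem _ (Algebra.subset_adjoin (by simp)) l, rfl⟩
      · refine ⟨Zmul * Dunkl l ζ κ,
          mul_mem (Algebra.subset_adjoin (by simp)) (Algebra.subset_adjoin (by simp)), ?_⟩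
        rw [mul_assoc (eIdem l ζ 0) Zmul (Dunkl l ζ κ)]
      · exact ⟨(Dunkl l ζ κ) ^ l, Subalgebra.pow_mem _ (Algebra.subset_adjoin (by simp)) l, rfl⟩
  | mul x y hx hy ihx ihy =>
      obtain ⟨h1, m1, rfl⟩ := ihx
      obtain ⟨h2, m2, rfl⟩ := ihy
      refine ⟨h1 * (eIdem l ζ 0 * h2), mul_mem m1 (mul_mem (e0_mem_cher κ) m2), ?_⟩
      simp only [mul_assoc]
      rw [← mul_assoc (eIdem l ζ 0) (eIdem l ζ 0), e0_idem hp]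

end SphAux

/-- Proposition 12(2): the spherical subalgebra
`e_0 H_κ e_0 = {e_0 ∘ h ∘ e_0 : h ∈ H_κ}` coincides with the ℂ-linear span of `e_0`
together with all (nonempty) finite products of the three operators
`e_0 ∘ Z^l ∘ e_0`, `e_0 ∘ Z ∘ ∂_κ ∘ e_0` and `e_0 ∘ ∂_κ^l ∘ e_0`
(i.e. `e_0 H_κ e_0 ≅ ℂ[z, ∂_κ]^{ℤ/lℤ} = ℂ[z^l, z∂_κ, ∂_κ^l]`). -/
theorem spherical_subalgebra_generators (l : ℕ) [NeZero l] (ζ : ℂ)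
    (hζ : ζ = Complex.exp (2 * Real.pi * Complex.I / l))
    (κ : Fin l → ℂ) (hκ0 : κ 0 = 0) :
    {w : Module.End ℂ Lau | ∃ h ∈ Cher l ζ κ, w = eIdem l ζ 0 * h * eIdem l ζ 0} =
      ↑(Submodule.span ℂ ({eIdem l ζ 0} ∪
        (Subsemigroup.closure
          {eIdem l ζ 0 * Zmul ^ l * eIdem l ζ 0,
           eIdem l ζ 0 * Zmul * Dunkl l ζ κ * eIdem l ζ 0,
           eIdem l ζ 0 * (Dunkl l ζ κ) ^ l * eIdem l ζ 0} :
            Set (Module.End ℂ Lau)))) := by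
  have hp : IsPrimitiveRoot ζ l := by
    rw [hζ]
    exact Complex.isPrimitiveRoot_exp l (NeZero.ne l)
  ext w
  constructor
  · rintro ⟨h, hh, rfl⟩
    exact SphAux.sandV κ hp hκ0 h (SphAux.cher_le_V hp h hh)
  · intro hw
    have hw' : w ∈ SphAux.SS l ζ κ := hw
    clear hw
    induction hw' using Submodule.span_induction with
    | mem x hx =>
        rcases hx with hx | hx
        · rw [Set.mem_singleton_iff] at hx
          subst hx
          exact ⟨1, one_mem _, by rw [mul_one, SphAux.e0_idem hp]⟩
        · obtain ⟨h, hh, hform⟩ := SphAux.clo_form κ hp x hx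
          exact ⟨h, hh, hform⟩
    | zero => exact ⟨0, zero_mem _, by rw [mul_zero, zero_mul]⟩
    | add x y _ _ ihx ihy =>
        obtain ⟨h1, m1, e1⟩ := ihx
        obtain ⟨h2, m2, e2⟩ := ihy
        exact ⟨h1 + h2, add_mem m1 m2, by rw [e1, e2, mul_add, add_mul]⟩
    | smul c x _ ihx =>
        obtain ⟨h1, m1, e1⟩ := ihx
        exact ⟨c • h1, Subalgebra.smul_mem _ m1 c, by rw [e1, mul_smul_comm, smul_mul_assoc]⟩
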